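/- Let f : ℝ^n × ℝ → ℝ be such that f(·, v) is C¹ and strictly convex with minimizer x*(v) for each fixed v, and define h(x̃, ṽ) := ∇_x f(x̃ + x*, v* + ṽ) − ∇_x f(x̃ + x*, v*) for fixed v*. Suppose ‖h(x̃, ṽ)‖ ≤ G₁(|ṽ|) + G₂(|ṽ|)‖x̃‖ with G₁, G₂ strictly increasing, continuous, and vanishing at 0. If ṽ(t) → 0 and is bounded, and x̃ solves x̃̇ = −K∇_x f(x̃ + x*, v*) − K h(x̃, ṽ(t)) with K ≻ 0, and W(x̃) := f(x̃ + x*, v*) − f(x*, v*) satisfies ‖∇W(x̃)‖‖x̃‖ ≤ k W(x̃) for ‖x̃‖ > c, then x̃(t) is bounded for all t ≥ 0. -/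

import Mathlib

open Filter
open scoped RealInnerProductSpace

section aux
variable {E : Type*} [NormedAddCommGroup E] [InnerProductSpace ℝ E] [CompleteSpace E]

lemma lineMap_hasDerivAt {φ : E → ℝ} (hφ : ContDiff ℝ 1 φ) (a b : E) (θ : ℝ) :
    HasDerivAt (fun θ : ℝ => φ (AffineMap.lineMap a b θ))
      ⟪gradient φ (AffineMap.lineMap a b θ), b - a⟫ θ := by
  have hd : DifferentiableAt ℝ φ (AffineMap.lineMap a b θ) :=
    (hφ.differentiable one_ne_zero).differentiableAt
  have hg := hd.hasGradientAt
  have hF := hg.hasFDerivAt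
  have hline : HasDerivAt (fun θ : ℝ => (AffineMap.lineMap a b : ℝ →ᵃ[ℝ] E) θ) (b - a) θ :=
    AffineMap.hasDerivAt_lineMap
  have := hF.comp_hasDerivAt θ hline
  simpa [InnerProductSpace.toDual_apply_apply, Function.comp_def] using this

lemma grad_ineq {φ : E → ℝ} (hφ : ContDiff ℝ 1 φ) (hc : ConvexOn ℝ Set.univ φ) (a b : E) :
    φ b - φ a ≤ ⟪gradient φ b, b - a⟫ := by
  have hq : ConvexOn ℝ Set.univ (fun θ : ℝ => φ (AffineMap.lineMap a b θ)) := by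
    simpa [Function.comp_def] using hc.comp_affineMap (AffineMap.lineMap a b)
  have h1 := hq.slope_le_of_hasDerivAt (Set.mem_univ (0:ℝ)) (Set.mem_univ (1:ℝ)) one_pos
      (lineMap_hasDerivAt hφ a b 1)
  rw [slope_def_field] at h1
  simpa using h1

lemma posdef_coercive [FiniteDimensional ℝ E]
    (T : E →ₗ[ℝ] E) (hpos : ∀ u : E, u ≠ 0 → 0 < ⟪T u, u⟫) :
    ∃ μ > 0, ∀ x : E, μ * ‖x‖ ^ 2 ≤ ⟪T x, x⟫ := by
  rcases subsingleton_or_nontrivial E with hs | hnt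
  · exact ⟨1, one_pos, fun x => by rw [Subsingleton.elim x 0]; simp⟩
  · have hTc : Continuous T := T.continuous_of_finiteDimensional
    have hcont : Continuous fun u : E => ⟪T u, u⟫ := hTc.inner continuous_id
    obtain ⟨u₀, hu₀s, hmin⟩ := (isCompact_sphere (0:E) 1).exists_isMinOn
      (NormedSpace.sphere_nonempty.mpr zero_le_one) hcont.continuousOn
    have hu₀ : ‖u₀‖ = 1 := by simpa using hu₀s
    have hu₀ne : u₀ ≠ 0 := by
      intro h; rw [h] at hu₀; simp at hu₀
    refine ⟨⟪T u₀, u₀⟫, hpos u₀ hu₀ne, fun x => ?_⟩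
    rcases eq_or_ne x 0 with rfl | hx
    · simp
    · have hxn : ‖x‖ ≠ 0 := norm_ne_zero_iff.mpr hx
      set u : E := ‖x‖⁻¹ • x with hu
      have hus : u ∈ Metric.sphere (0:E) 1 := by
        simp [hu, norm_smul, abs_of_nonneg (inv_nonneg.mpr (norm_nonneg x)),
          inv_mul_cancel₀ hxn]
      have h1 : ⟪T u₀, u₀⟫ ≤ ⟪T u, u⟫ := isMinOn_iff.mp hmin u hus
      have hx_eq : x = ‖x‖ • u := by rw [hu, smul_smul, mul_inv_cancel₀ hxn, one_smul]
      have hTx : ⟪T x, x⟫ = ‖x‖ * (‖x‖ * ⟪T u, u⟫) := by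
        conv_lhs => rw [hx_eq]
        rw [map_smul, real_inner_smul_left, real_inner_smul_right]
      rw [hTx]
      nlinarith [norm_nonneg x, sq_nonneg ‖x‖]

end aux

set_option maxHeartbeats 1000000 in
theorem stmt19 {n : ℕ}
    (f : EuclideanSpace ℝ (Fin n) → ℝ → ℝ)
    (hf : ∀ v, ContDiff ℝ 1 (fun x => f x v))
    (hconv : ∀ v, StrictConvexOn ℝ Set.univ (fun x => f x v))
    (xstarF : ℝ → EuclideanSpace ℝ (Fin n))
    (hmin : ∀ v, IsMinOn (fun x => f x v) Set.univ (xstarF v))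
    (vstar : ℝ) (xstar : EuclideanSpace ℝ (Fin n)) (hxstar : xstar = xstarF vstar)
    -- the coupling term `h(x̃, ṽ) = ∇_x f(x̃ + x*, v* + ṽ) − ∇_x f(x̃ + x*, v*)`
    (h : EuclideanSpace ℝ (Fin n) → ℝ → EuclideanSpace ℝ (Fin n))
    (hh : ∀ xt vt, h xt vt =
      gradient (fun x => f x (vstar + vt)) (xt + xstar) -
      gradient (fun x => f x vstar) (xt + xstar))
    -- growth condition F1)
    (G1 G2 : ℝ → ℝ) (hG1 : StrictMono G1) (hG2 : StrictMono G2)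
    (hG1c : Continuous G1) (hG2c : Continuous G2) (hG10 : G1 0 = 0) (hG20 : G2 0 = 0)
    (hgrowth : ∀ xt vt, ‖h xt vt‖ ≤ G1 |vt| + G2 |vt| * ‖xt‖)
    -- the perturbation `ṽ(t)` tends to `0` and is bounded
    (vt : ℝ → ℝ) (hvt : Tendsto vt atTop (nhds 0)) (hvb : ∃ M, ∀ t, |vt t| ≤ M)
    -- `K` symmetric positive definite
    (K : EuclideanSpace ℝ (Fin n) →ₗ[ℝ] EuclideanSpace ℝ (Fin n))
    (hKsymm : ∀ u v, ⟪K u, v⟫ = ⟪u, K v⟫) (hKpos : ∀ u, u ≠ 0 → 0 < ⟪K u, u⟫)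
    -- perturbed gradient flow `x̃̇ = −K∇_x f(x̃ + x*, v*) − K h(x̃, ṽ(t))`
    (xt : ℝ → EuclideanSpace ℝ (Fin n))
    (hdyn : ∀ t, HasDerivAt xt
      (-(K (gradient (fun x => f x vstar) (xt t + xstar))) - K (h (xt t) (vt t))) t)
    -- shifted cost `W` and growth condition F2)
    (W : EuclideanSpace ℝ (Fin n) → ℝ)
    (hW : ∀ x, W x = f (x + xstar) vstar - f xstar vstar)
    (c k : ℝ) (hc : 0 < c) (hk : 0 < k)
    (hF2 : ∀ x : EuclideanSpace ℝ (Fin n), c < ‖x‖ → ‖gradient W x‖ * ‖x‖ ≤ k * W x) :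
    -- then the trajectory is bounded in forward time
    ∃ M : ℝ, ∀ t ≥ 0, ‖xt t‖ ≤ M := by
  classical
  rcases subsingleton_or_nontrivial (EuclideanSpace ℝ (Fin n)) with hsub | hnt
  · exact ⟨0, fun t _ =>
      le_of_eq (by rw [Subsingleton.elim (xt t) (0 : EuclideanSpace ℝ (Fin n)), norm_zero])⟩
  -- continuity of the trajectory
  have hxtc : Continuous xt := continuous_iff_continuousAt.mpr fun t => (hdyn t).continuousAt
  -- continuity of gradients
  have hgradc : ∀ v : ℝ, Continuous (fun y => gradient (fun x => f x v) y) := by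
    intro v
    have h1 : Continuous (fun y => fderiv ℝ (fun x => f x v) y) :=
      (hf v).continuous_fderiv one_ne_zero
    exact (InnerProductSpace.toDual ℝ (EuclideanSpace ℝ (Fin n))).symm.continuous.comp h1
  -- W-positivity on the unit sphere, via strict convexity
  have hWpos : ∀ u : EuclideanSpace ℝ (Fin n), u ≠ 0 →
      0 < f (u + xstar) vstar - f xstar vstar := by
    intro u hu
    have hge : f xstar vstar ≤ f (u + xstar) vstar := by
      have := isMinOn_iff.mp (hmin vstar) (u + xstar) (Set.mem_univ _)
      rw [← hxstar] at this
      simpa using this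
    rcases lt_or_eq_of_le hge with hlt | heq
    · linarith
    · exfalso
      have hne : xstar ≠ u + xstar := by
        intro hEq
        exact hu (right_eq_add.mp hEq)
      have hs := (hconv vstar).2 (Set.mem_univ xstar) (Set.mem_univ (u + xstar)) hne
        (by norm_num : (0:ℝ) < 1/2) (by norm_num : (0:ℝ) < 1/2) (by norm_num)
      simp only [smul_eq_mul] at hs
      have hmin' := isMinOn_iff.mp (hmin vstar)
        ((1/2 : ℝ) • xstar + (1/2 : ℝ) • (u + xstar)) (Set.mem_univ _)
      rw [← hxstar] at hmin'
      rw [← heq] at hs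
      linarith
  -- the minimum β of ⟪∇f(u+x*,v*), u⟫ on the unit sphere is positive
  have hF0c : Continuous (fun u : EuclideanSpace ℝ (Fin n) =>
      ⟪gradient (fun x => f x vstar) (u + xstar), u⟫) :=
    ((hgradc vstar).comp (continuous_id.add continuous_const)).inner continuous_id
  obtain ⟨u₀, hu₀s, hu₀min⟩ := (isCompact_sphere (0 : EuclideanSpace ℝ (Fin n)) 1).exists_isMinOn
    (NormedSpace.sphere_nonempty.mpr zero_le_one) hF0c.continuousOn
  set β : ℝ := ⟪gradient (fun x => f x vstar) (u₀ + xstar), u₀⟫ with hβ_def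
  have hu₀ : ‖u₀‖ = 1 := by simpa using hu₀s
  have hu₀ne : u₀ ≠ 0 := by intro hEq; rw [hEq] at hu₀; simp at hu₀
  have hβpos : 0 < β := by
    have hgi := grad_ineq (hf vstar) (hconv vstar).convexOn xstar (u₀ + xstar)
    have hsimp : u₀ + xstar - xstar = u₀ := add_sub_cancel_right u₀ xstar
    rw [hsimp] at hgi
    have := hWpos u₀ hu₀ne
    linarith
  have hβsphere : ∀ u : EuclideanSpace ℝ (Fin n), ‖u‖ = 1 →
      β ≤ ⟪gradient (fun x => f x vstar) (u + xstar), u⟫ := by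
    intro u hun
    exact isMinOn_iff.mp hu₀min u (by simp [hun])
  -- choose ν > 0 with G1 ν + G2 ν ≤ β / 2
  obtain ⟨ν, hνpos, hνb⟩ : ∃ ν > 0, G1 ν + G2 ν ≤ β / 2 := by
    have hten : Tendsto (fun s => G1 s + G2 s) (nhds 0) (nhds 0) := by
      have := (hG1c.add hG2c).tendsto 0
      simpa [hG10, hG20, Pi.add_def] using this
    have hev : ∀ᶠ s in nhds 0, G1 s + G2 s < β / 2 :=
      hten.eventually_lt_const (by linarith)
    obtain ⟨ε, hε, hball⟩ := Metric.eventually_nhds_iff.mp hev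
    refine ⟨ε / 2, by linarith, le_of_lt (hball ?_)⟩
    rw [Real.dist_eq, sub_zero, abs_of_pos (by linarith)]
    linarith
  -- the key positivity estimate for the perturbed gradient outside the unit ball
  have key : ∀ v : ℝ, |v| ≤ ν → ∀ x : EuclideanSpace ℝ (Fin n), 1 < ‖x‖ →
      0 ≤ ⟪x, gradient (fun z => f z (vstar + v)) (x + xstar)⟫ := by
    intro v hv x hx
    have hxn : ‖x‖ ≠ 0 := by positivity
    set u : EuclideanSpace ℝ (Fin n) := ‖x‖⁻¹ • x with hu_def
    have hun : ‖u‖ = 1 := by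
      simp only [hu_def, norm_smul, Real.norm_eq_abs,
        abs_of_nonneg (inv_nonneg.mpr (norm_nonneg x))]
      exact inv_mul_cancel₀ hxn
    have hune : u ≠ 0 := by intro hEq; rw [hEq] at hun; simp at hun
    set A : EuclideanSpace ℝ (Fin n) := gradient (fun z => f z (vstar + v)) (x + xstar) with hA
    set B : EuclideanSpace ℝ (Fin n) := gradient (fun z => f z (vstar + v)) (u + xstar) with hB
    have hφ := hf (vstar + v)
    have hφc := (hconv (vstar + v)).convexOn
    have h1 := grad_ineq hφ hφc (u + xstar) (x + xstar)
    have h2 := grad_ineq hφ hφc (x + xstar) (u + xstar)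
    have hd1 : x + xstar - (u + xstar) = x - u := by abel
    have hd2 : u + xstar - (x + xstar) = u - x := by abel
    rw [hd1] at h1
    rw [hd2] at h2
    -- 0 ≤ ⟪A, x - u⟫ + ⟪B, u - x⟫
    rw [← hA] at h1
    rw [← hB] at h2
    have hsum : 0 ≤ ⟪A, x - u⟫ + ⟪B, u - x⟫ := by linarith
    have hxu : x - u = (1 - ‖x‖⁻¹) • x := by
      rw [sub_smul, one_smul, hu_def]
    have hux : u - x = -((1 - ‖x‖⁻¹) • x) := by rw [← hxu]; abel
    rw [hxu, hux, real_inner_smul_right, inner_neg_right, real_inner_smul_right] at hsum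
    have hcoef : 0 < 1 - ‖x‖⁻¹ := by
      have : ‖x‖⁻¹ < 1 := by
        rw [inv_lt_one_iff₀]; right; exact hx
      linarith
    have hBA : ⟪B, x⟫ ≤ ⟪A, x⟫ := by
      have hmul : (1 - ‖x‖⁻¹) * ⟪B, x⟫ ≤ (1 - ‖x‖⁻¹) * ⟪A, x⟫ := by linarith
      exact (mul_le_mul_iff_of_pos_left hcoef).mp hmul
    -- lower bound for ⟪B, x⟫
    have hxu2 : x = ‖x‖ • u := by rw [hu_def, smul_smul, mul_inv_cancel₀ hxn, one_smul]
    have hBx : ⟪B, x⟫ = ‖x‖ * ⟪B, u⟫ := by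
      conv_lhs => rw [hxu2]
      rw [real_inner_smul_right]
    -- B = ∇f(u + x*, v*) + h u v
    have hBdecomp : B = gradient (fun z => f z vstar) (u + xstar) + h u v := by
      rw [hB, hh u v]; abel
    have hhb : ‖h u v‖ ≤ G1 |v| + G2 |v| := by
      have := hgrowth u v
      rw [hun, mul_one] at this
      exact this
    have hmon : G1 |v| + G2 |v| ≤ β / 2 := by
      have l1 : G1 |v| ≤ G1 ν := hG1.monotone hv
      have l2 : G2 |v| ≤ G2 ν := hG2.monotone hv
      linarith
    have hinner_h : -(β / 2) ≤ ⟪h u v, u⟫ := by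
      have habs := abs_real_inner_le_norm (h u v) u
      rw [hun, mul_one] at habs
      have := neg_abs_le ⟪h u v, u⟫
      have hle : ‖h u v‖ ≤ β / 2 := le_trans hhb hmon
      linarith [abs_nonneg ⟪h u v, u⟫]
    have hBu : β / 2 ≤ ⟪B, u⟫ := by
      rw [hBdecomp, inner_add_left]
      have := hβsphere u hun
      linarith
    have hBxpos : 0 ≤ ⟪B, x⟫ := by
      rw [hBx]
      exact mul_nonneg (norm_nonneg x) (le_trans (by linarith) hBu)
    rw [real_inner_comm]
    linarith
  -- eventually |vt t| ≤ ν
  obtain ⟨T₀, hT₀⟩ : ∃ T₀, ∀ t ≥ T₀, |vt t| ≤ ν := by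
    have hev : ∀ᶠ t in atTop, vt t ∈ Metric.ball (0:ℝ) ν :=
      hvt (Metric.ball_mem_nhds (0:ℝ) hνpos)
    obtain ⟨T₀, hT₀⟩ := eventually_atTop.mp hev
    refine ⟨T₀, fun t ht => ?_⟩
    have := hT₀ t ht
    rw [Metric.mem_ball, Real.dist_eq, sub_zero] at this
    exact this.le
  set T : ℝ := max T₀ 0 with hT_def
  have hTnonneg : (0:ℝ) ≤ T := le_max_right _ _
  have hvsmall : ∀ t, T ≤ t → |vt t| ≤ ν := fun t ht =>
    hT₀ t (le_trans (le_max_left _ _) ht)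
  -- inverse of K
  have hKinj : Function.Injective K := by
    intro a b hab
    by_contra hne
    have h0 : K (a - b) = 0 := by rw [map_sub, hab, sub_self]
    have hpos := hKpos (a - b) (sub_ne_zero.mpr hne)
    rw [h0] at hpos
    simp at hpos
  have hKsurj : Function.Surjective K := LinearMap.injective_iff_surjective.mp hKinj
  set eK := LinearEquiv.ofBijective K ⟨hKinj, hKsurj⟩ with heK
  set Q : EuclideanSpace ℝ (Fin n) → EuclideanSpace ℝ (Fin n) := fun x => eK.symm x with hQ
  have hKQ : ∀ x, K (Q x) = x := by
    intro x
    have := eK.apply_symm_apply x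
    exact this
  have hQsymm : ∀ a b, ⟪Q a, b⟫ = ⟪a, Q b⟫ := by
    intro a b
    conv_lhs => rw [← hKQ b]
    rw [(hKsymm (Q a) (Q b)).symm, hKQ a]
  have hQpos : ∀ x : EuclideanSpace ℝ (Fin n), x ≠ 0 → 0 < ⟪Q x, x⟫ := by
    intro x hx
    have hQx : Q x ≠ 0 := by
      intro hEq
      apply hx
      rw [← hKQ x, hEq, map_zero]
    have hp := hKpos (Q x) hQx
    rw [hKQ x] at hp
    rwa [real_inner_comm]
  -- coercivity of V
  obtain ⟨μ, hμpos, hμb⟩ := posdef_coercive (eK.symm.toLinearMap) (by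
    intro u hu
    have := hQpos u hu
    simpa [hQ] using this)
  set V : EuclideanSpace ℝ (Fin n) → ℝ := fun x => ⟪Q x, x⟫ with hV
  have hμV : ∀ x, μ * ‖x‖ ^ 2 ≤ V x := by
    intro x
    have := hμb x
    simpa [hQ, hV] using this
  have hQc : Continuous Q := by
    have := (eK.symm.toLinearMap).continuous_of_finiteDimensional
    simpa [hQ] using this
  have hVcont : Continuous V := hQc.inner continuous_id
  -- max of V on the closed unit ball
  obtain ⟨yS, hySmem, hySmax⟩ := (isCompact_closedBall (0 : EuclideanSpace ℝ (Fin n)) 1).exists_isMaxOn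
    ⟨0, by simp⟩ hVcont.continuousOn
  have hS : ∀ y : EuclideanSpace ℝ (Fin n), ‖y‖ ≤ 1 → V y ≤ V yS := by
    intro y hy
    exact isMaxOn_iff.mp hySmax y (by simpa [Metric.mem_closedBall, dist_zero_right] using hy)
  -- derivative of ρ = V ∘ xt
  set xd : ℝ → EuclideanSpace ℝ (Fin n) := fun t =>
    -(K (gradient (fun x => f x vstar) (xt t + xstar))) - K (h (xt t) (vt t)) with hxd
  set ρ : ℝ → ℝ := fun t => V (xt t) with hρ
  have hρcont : Continuous ρ := hVcont.comp hxtc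
  have hQder : ∀ t, HasDerivAt (fun s => Q (xt s)) (Q (xd t)) t := by
    intro t
    have hfd := (LinearMap.toContinuousLinearMap eK.symm.toLinearMap).hasFDerivAt
      (x := xt t)
    have := hfd.comp_hasDerivAt t (hdyn t)
    simpa [hQ, hxd, LinearMap.coe_toContinuousLinearMap', Function.comp_def] using this
  have hρder : ∀ t, HasDerivAt ρ (2 * ⟪Q (xt t), xd t⟫) t := by
    intro t
    have := (hQder t).inner ℝ (hdyn t)
    have hval : ⟪Q (xt t), xd t⟫ + ⟪Q (xd t), xt t⟫ = 2 * ⟪Q (xt t), xd t⟫ := by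
      rw [hQsymm (xd t) (xt t), real_inner_comm]
      ring
    rw [hval] at this
    exact this
  -- the derivative is nonpositive for large states and large times
  have hderiv_nonpos : ∀ s, T ≤ s → 1 < ‖xt s‖ → 2 * ⟪Q (xt s), xd s⟫ ≤ 0 := by
    intro s hs hxs
    have hxdeq : xd s = -(K (gradient (fun z => f z (vstar + vt s)) (xt s + xstar))) := by
      rw [hxd]
      simp only []
      rw [hh (xt s) (vt s), map_sub]
      abel
    have hinner : ⟪Q (xt s), xd s⟫ =
        -⟪xt s, gradient (fun z => f z (vstar + vt s)) (xt s + xstar)⟫ := by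
      rw [hxdeq, inner_neg_right, (hKsymm (Q (xt s)) _).symm, hKQ]
    have hkey := key (vt s) (hvsmall s hs) (xt s) hxs
    rw [hinner]
    linarith
  -- bound for t ≥ T
  set L : ℝ := max (ρ T) (V yS) with hL
  have hbound : ∀ t, T ≤ t → ρ t ≤ L := by
    intro t₁ ht₁
    by_contra hgt
    push_neg at hgt
    set A' : Set ℝ := {s : ℝ | s ∈ Set.Icc T t₁ ∧ ρ s ≤ L} with hA'
    have hTA : T ∈ A' := ⟨⟨le_refl T, ht₁⟩, le_max_left _ _⟩
    have hAne : A'.Nonempty := ⟨T, hTA⟩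
    have hAbdd : BddAbove A' := ⟨t₁, fun s hs => hs.1.2⟩
    have hAclosed : IsClosed A' := by
      have : A' = Set.Icc T t₁ ∩ ρ ⁻¹' Set.Iic L := rfl
      rw [this]
      exact isClosed_Icc.inter (isClosed_Iic.preimage hρcont)
    set t₀ : ℝ := sSup A' with ht₀_def
    have ht₀A : t₀ ∈ A' := hAclosed.csSup_mem hAne hAbdd
    have ht₀le : ρ t₀ ≤ L := ht₀A.2
    have ht₀mem : t₀ ∈ Set.Icc T t₁ := ht₀A.1
    have ht₀lt : t₀ < t₁ := by
      rcases lt_or_eq_of_le ht₀mem.2 with hlt | heq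
      · exact hlt
      · exfalso; rw [heq] at ht₀le; linarith
    have hmidgt : ∀ s, t₀ < s → s ≤ t₁ → L < ρ s := by
      intro s hs1 hs2
      by_contra hle
      push_neg at hle
      have hsA : s ∈ A' := ⟨⟨le_trans ht₀mem.1 hs1.le, hs2⟩, hle⟩
      exact absurd (le_csSup hAbdd hsA) (not_le.mpr hs1)
    have hanti : AntitoneOn ρ (Set.Icc t₀ t₁) := by
      apply antitoneOn_of_deriv_nonpos (convex_Icc _ _) hρcont.continuousOn
      · intro s _
        exact (hρder s).differentiableAt.differentiableWithinAt
      · intro s hs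
        rw [interior_Icc] at hs
        rw [(hρder s).deriv]
        have hsT : T ≤ s := le_trans ht₀mem.1 hs.1.le
        have hLs : L < ρ s := hmidgt s hs.1 hs.2.le
        have hnorm : 1 < ‖xt s‖ := by
          by_contra hle
          push_neg at hle
          have : ρ s ≤ V yS := hS (xt s) hle
          have : ρ s ≤ L := le_trans this (le_max_right _ _)
          linarith
        exact hderiv_nonpos s hsT hnorm
    have hfin := hanti (Set.left_mem_Icc.mpr ht₀lt.le) (Set.right_mem_Icc.mpr ht₀lt.le) ht₀lt.le
    have := hmidgt t₁ ht₀lt le_rfl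
    linarith
  -- combine
  obtain ⟨M₁, hM₁⟩ : ∃ M₁, ∀ t ∈ Set.Icc (0:ℝ) T, ‖xt t‖ ≤ M₁ := by
    obtain ⟨C, hC⟩ := (isCompact_Icc (a := (0:ℝ)) (b := T)).exists_bound_of_continuousOn
      hxtc.norm.continuousOn
    exact ⟨C, fun t ht => by simpa using hC t ht⟩
  refine ⟨max M₁ (Real.sqrt (L / μ)), fun t ht => ?_⟩
  rcases le_total t T with hle | hge
  · exact le_trans (hM₁ t ⟨ht, hle⟩) (le_max_left _ _)
  · have h1 : μ * ‖xt t‖ ^ 2 ≤ L := le_trans (hμV (xt t)) (hbound t hge)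
    have h2 : ‖xt t‖ ^ 2 ≤ L / μ := (le_div_iff₀' hμpos).mpr h1
    have h3 : Real.sqrt (‖xt t‖ ^ 2) ≤ Real.sqrt (L / μ) := Real.sqrt_le_sqrt h2
    rw [Real.sqrt_sq (norm_nonneg _)] at h3
    exact le_trans h3 (le_max_right _ _)
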